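/- If H ≠ K_5 is a 5-Ore graph and T is a subgraph of H isomorphic to K_4, then there exists either an Ore-collapsible subset of H disjoint from T or an emerald of H disjoint from T. -/

import Mathlib

open SimpleGraph

namespace Postle

noncomputable def epsC : ℝ := 1 / 21
noncomputable def delC : ℝ := 8 / 21
noncomputable def PC : ℝ := 48 / 21
noncomputable def QC : ℝ := 8 / 21

/-- The degree of a vertex, via the cardinality of its neighbor set. -/
noncomputable def degS {V : Type} (G : SimpleGraph V) (v : V) : ℕ :=
  (G.neighborSet v).ncard

/-- A graph is 5-critical if it is not 4-colorable but every proper subgraph is. -/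
def FiveCritical {V : Type} (G : SimpleGraph V) : Prop :=
  ¬ G.Colorable 4 ∧ ∀ H : SimpleGraph V, H < G → H.Colorable 4

/-- `G` is (isomorphic to) the complete graph `K₅`. -/
def IsK5 {V : Type} (G : SimpleGraph V) : Prop :=
  Nonempty (G ≃g (⊤ : SimpleGraph (Fin 5)))

/-- `T(G)`: the maximum, over collections of pairwise disjoint cliques of size 3 or 4 in `G`,
of (number of 3-cliques) + 2 * (number of 4-cliques); each clique of size `k` contributes
`k - 2`. -/
noncomputable def TT {V : Type} (G : SimpleGraph V) : ℕ :=
  sSup { n : ℕ | ∃ C : Finset (Finset V),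
    ((C : Set (Finset V)).Pairwise fun A B => Disjoint A B) ∧
    (∀ W ∈ C, G.IsClique (W : Set V) ∧ (W.card = 3 ∨ W.card = 4)) ∧
    n = ∑ W ∈ C, (W.card - 2) }

/-- The potential `p(G) = (9+ε)|V(G)| - 4|E(G)| - δ·T(G)` with `ε = 1/21`, `δ = 8/21`. -/
noncomputable def pot {V : Type} (G : SimpleGraph V) : ℝ :=
  (9 + epsC) * (Nat.card V : ℝ) - 4 * (G.edgeSet.ncard : ℝ) - delC * (TT G : ℝ)

/-- `p_G(R) = p(G[R])`. -/
noncomputable def potOn {V : Type} (G : SimpleGraph V) (R : Set V) : ℝ :=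
  pot (G.induce R)

/-- The Kostochka–Yancey potential `p_KY(G) = 9|V(G)| - 4|E(G)|`. -/
noncomputable def potKY {V : Type} (G : SimpleGraph V) : ℝ :=
  9 * (Nat.card V : ℝ) - 4 * (G.edgeSet.ncard : ℝ)

noncomputable def potKYOn {V : Type} (G : SimpleGraph V) (R : Set V) : ℝ :=
  potKY (G.induce R)

/-- `G` is an Ore-composition of `G₁` (the edge side, with replaced edge `xy`) and `G₂`
(the vertex side, with split vertex `z`): delete the edge `xy` of `G₁`, split `z` into two
vertices of positive degree, and identify them with `x` and `y`. The set `S` records which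
neighbors of `z` get attached to `x`. -/
def IsOreComposition {V V₁ V₂ : Type} (G : SimpleGraph V)
    (G₁ : SimpleGraph V₁) (G₂ : SimpleGraph V₂) : Prop :=
  ∃ (x y : V₁) (z : V₂) (f₁ : V₁ ↪ V) (f₂ : {w : V₂ // w ≠ z} ↪ V) (S : Set V₂),
    G₁.Adj x y ∧
    (∀ w ∈ S, G₂.Adj z w) ∧ S.Nonempty ∧ (G₂.neighborSet z \ S).Nonempty ∧
    Set.range ⇑f₁ ∩ Set.range ⇑f₂ = ∅ ∧
    Set.range ⇑f₁ ∪ Set.range ⇑f₂ = Set.univ ∧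
    ∀ a b : V, G.Adj a b ↔
      ((∃ a' b' : V₁, f₁ a' = a ∧ f₁ b' = b ∧ G₁.Adj a' b' ∧
          ¬(a' = x ∧ b' = y) ∧ ¬(a' = y ∧ b' = x)) ∨
       (∃ a' b' : {w : V₂ // w ≠ z}, f₂ a' = a ∧ f₂ b' = b ∧ G₂.Adj a'.1 b'.1) ∨
       (∃ w : {w : V₂ // w ≠ z}, G₂.Adj z w.1 ∧
         ((((a = f₁ x ∧ b = f₂ w) ∨ (b = f₁ x ∧ a = f₂ w)) ∧ w.1 ∈ S) ∨
          (((a = f₁ y ∧ b = f₂ w) ∨ (b = f₁ y ∧ a = f₂ w)) ∧ w.1 ∉ S))))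

/-- A graph is 5-Ore if it can be obtained from copies of `K₅` by repeated Ore-compositions. -/
inductive Is5Ore : {V : Type} → SimpleGraph V → Prop
  | k5 {V : Type} {G : SimpleGraph V} (h : IsK5 G) : Is5Ore G
  | ore {V V₁ V₂ : Type} {G : SimpleGraph V} {G₁ : SimpleGraph V₁} {G₂ : SimpleGraph V₂}
      (h₁ : Is5Ore G₁) (h₂ : Is5Ore G₂) (h : IsOreComposition G G₁ G₂) : Is5Ore G

/-- The boundary of `R`: the vertices of `R` with a neighbor outside `R`. -/
def boundary {V : Type} (G : SimpleGraph V) (R : Set V) : Set V :=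
  {v : V | v ∈ R ∧ ∃ w, w ∉ R ∧ G.Adj v w}

/-- The graph `G + uv` obtained by adding the edge `uv`. -/
noncomputable def addEdge {α : Type} (G : SimpleGraph α) (u v : α) : SimpleGraph α :=
  G ⊔ SimpleGraph.fromEdgeSet {s(u, v)}

/-- `R` is an Ore-collapsible subset of `G`: a proper subset whose boundary consists of exactly
two non-adjacent vertices `u, v` such that `G[R] + uv` is 5-Ore. -/
def OreCollapsible {V : Type} (G : SimpleGraph V) (R : Set V) : Prop :=
  R ≠ Set.univ ∧ ∃ u v : ↥R, u.1 ≠ v.1 ∧ ¬ G.Adj u.1 v.1 ∧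
    boundary G R = {u.1, v.1} ∧ Is5Ore (addEdge (G.induce R) u v)

/-- An emerald: a subgraph isomorphic to `K₄` all of whose vertices have degree 4 in `G`,
given by its vertex set. -/
def IsEmerald {V : Type} (G : SimpleGraph V) (S : Set V) : Prop :=
  S.ncard = 4 ∧ (∀ a ∈ S, ∀ b ∈ S, a ≠ b → G.Adj a b) ∧ ∀ v ∈ S, degS G v = 4

/-- A diamond: a subgraph isomorphic to `K₅ - e` in which the vertices not incident to `e`
have degree 4 in `G`, given by its vertex set. -/
def IsDiamond {V : Type} (G : SimpleGraph V) (D : Set V) : Prop :=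
  D.ncard = 5 ∧ ∃ u ∈ D, ∃ v ∈ D, u ≠ v ∧
    (∀ a ∈ D, ∀ b ∈ D, a ≠ b → ¬(a = u ∧ b = v) → ¬(a = v ∧ b = u) → G.Adj a b) ∧
    ∀ w ∈ D, w ≠ u → w ≠ v → degS G w = 4

/-- A graph is ungemmed if it contains neither a diamond nor an emerald. -/
def Ungemmed {V : Type} (G : SimpleGraph V) : Prop :=
  (¬ ∃ D : Set V, IsDiamond G D) ∧ ¬ ∃ S : Set V, IsEmerald G S

/-- `R` is collapsible: a proper subset with `|R| ≥ 5` such that in every proper 4-coloring of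
`G[R]` all boundary vertices of `R` receive the same color. -/
def Collapsible {V : Type} (G : SimpleGraph V) (R : Set V) : Prop :=
  R ≠ Set.univ ∧ 5 ≤ R.ncard ∧
    ∀ φ : (G.induce R).Coloring (Fin 4), ∀ u v : ↥R,
      u.1 ∈ boundary G R → v.1 ∈ boundary G R → φ u = φ v

/-- The critical complement of a collapsible set `R`: identify the boundary of `R` to a single
new vertex (`none`) and delete the rest of `R`. -/
noncomputable def criticalComplement {V : Type} (G : SimpleGraph V) (R : Set V) :
    SimpleGraph (Option ↥(Rᶜ)) :=
  SimpleGraph.fromRel fun a b =>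
    match a, b with
    | some w, some w' => G.Adj w.1 w'.1
    | none, some w => ∃ x ∈ boundary G R, G.Adj x w.1
    | _, _ => False

/-- The φ-identification `G_φ(R)`: vertices outside `R` together with four vertices `x_i`;
the vertices of `R` colored `i` are identified to `x_i`, and all edges `x_i x_j` are added. -/
noncomputable def phiIdent {V : Type} (G : SimpleGraph V) (R : Set V) (φ : ↥R → Fin 4) :
    SimpleGraph ((↥(Rᶜ)) ⊕ Fin 4) :=
  SimpleGraph.fromRel fun a b =>
    match a, b with
    | Sum.inl w, Sum.inl w' => G.Adj w.1 w'.1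
    | Sum.inl w, Sum.inr i => ∃ r : ↥R, φ r = i ∧ G.Adj r.1 w.1
    | Sum.inr _, Sum.inr _ => True
    | _, _ => False

/-- A critical extension of `R` in `G`: a proper 4-coloring `φ` of `G[R]` together with a
5-critical subgraph `W` of the φ-identification `G_φ(R)`, with vertex set `S`. -/
structure CriticalExtension {V : Type} (G : SimpleGraph V) (R : Set V) where
  φ : (G.induce R).Coloring (Fin 4)
  S : Set ((↥(Rᶜ)) ⊕ Fin 4)
  W : SimpleGraph ↥S
  le : W ≤ (phiIdent G R ⇑φ).induce S
  crit : FiveCritical W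

/-- The critical extension `R' = (V(W) - V(X)) ∪ R` of `R`. -/
noncomputable def CriticalExtension.verts {V : Type} {G : SimpleGraph V} {R : Set V}
    (E : CriticalExtension G R) : Set V :=
  R ∪ {v : V | ∃ h : v ∈ Rᶜ, Sum.inl (⟨v, h⟩ : ↥(Rᶜ)) ∈ E.S}

/-- The size `|X|` of the core `W ∩ X` of the extension. -/
noncomputable def CriticalExtension.coreCard {V : Type} {G : SimpleGraph V} {R : Set V}
    (E : CriticalExtension G R) : ℕ :=
  {i : Fin 4 | Sum.inr i ∈ E.S}.ncard

/-- The graph `W - X` obtained from the extender `W` by deleting the core vertices. -/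
noncomputable def CriticalExtension.WminusX {V : Type} {G : SimpleGraph V} {R : Set V}
    (E : CriticalExtension G R) :=
  E.W.induce {w : ↥E.S | w.1.isLeft = true}

/-- `f(n) = (9+ε)n - 4·C(n,2)`. -/
noncomputable def fExt (n : ℕ) : ℝ := (9 + epsC) * (n : ℝ) - 4 * ((n.choose 2 : ℕ) : ℝ)

/-- The closed neighborhood of a vertex. -/
def closedNbhd {V : Type} (G : SimpleGraph V) (v : V) : Set V :=
  insert v (G.neighborSet v)

/-- A cluster: a maximal set of degree-four vertices with the same closed neighborhood. -/
def IsCluster {V : Type} (G : SimpleGraph V) (C : Set V) : Prop :=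
  C.Nonempty ∧ (∀ v ∈ C, degS G v = 4) ∧
  (∀ u ∈ C, ∀ v ∈ C, closedNbhd G u = closedNbhd G v) ∧
  ∀ C' : Set V, C ⊆ C' → (∀ v ∈ C', degS G v = 4) →
    (∀ u ∈ C', ∀ v ∈ C', closedNbhd G u = closedNbhd G v) → C' = C

open Classical in
/-- The list of cluster sizes of `G`, in decreasing order. -/
noncomputable def clusterList {V : Type} [Fintype V] (G : SimpleGraph V) : List ℕ :=
  ((((Finset.univ : Finset V).filter fun v => degS G v = 4).image
      fun v => (Finset.univ : Finset V).filter
        fun u => degS G u = 4 ∧ closedNbhd G u = closedNbhd G v).val.map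
    Finset.card).sort (· ≤ ·) |>.reverse

/-- `H` is smaller than `G`: fewer vertices; or the same number of vertices and more edges; or
the same number of vertices and edges and `H` precedes `G` in the lexicographic ordering of
cluster sizes listed in decreasing order. -/
def Smaller {V₁ V₂ : Type} [Fintype V₁] [Fintype V₂]
    (H : SimpleGraph V₁) (G : SimpleGraph V₂) : Prop :=
  Nat.card V₁ < Nat.card V₂ ∨
  (Nat.card V₁ = Nat.card V₂ ∧ G.edgeSet.ncard < H.edgeSet.ncard) ∨
  (Nat.card V₁ = Nat.card V₂ ∧ H.edgeSet.ncard = G.edgeSet.ncard ∧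
    List.Lex (· > ·) (clusterList H) (clusterList G))

/-- A 5-critical graph `G` is good if every smaller 5-critical graph satisfies the conclusion
of the main theorem. -/
def Good {V : Type} [Fintype V] (G : SimpleGraph V) : Prop :=
  FiveCritical G ∧
    ∀ (V' : Type) [Fintype V'] (H : SimpleGraph V'), FiveCritical H → Smaller H G →
      (IsK5 H → pot H = 5 + 5 * epsC - 2 * delC) ∧
      (Is5Ore H → ¬ IsK5 H →
        pot H ≤ 5 + (Nat.card V' : ℝ) * epsC - (2 + ((Nat.card V' : ℝ) - 1) / 4) * delC) ∧
      (¬ Is5Ore H → pot H ≤ 5 - PC)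

/-- `G` is tight if it is good and `p(G) ≥ 5 - P - Q`. -/
def Tight {V : Type} [Fintype V] (G : SimpleGraph V) : Prop :=
  Good G ∧ pot G ≥ 5 - PC - QC

/-- `u, v` is an identifiable pair in a proper subset `R`: `G[R] + uv` is not 4-colorable. -/
def IdentifiablePair {V : Type} (G : SimpleGraph V) (R : Set V) (u v : ↥R) : Prop :=
  R ≠ Set.univ ∧ ¬ (addEdge (G.induce R) u v).Colorable 4


section Aux

open Set

lemma adj_addEdge {α : Type} (G : SimpleGraph α) (u v a b : α) :
    (addEdge G u v).Adj a b ↔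
      G.Adj a b ∨ (a ≠ b ∧ ((a = u ∧ b = v) ∨ (a = v ∧ b = u))) := by
  simp only [addEdge, SimpleGraph.sup_adj, SimpleGraph.fromEdgeSet_adj, Set.mem_singleton_iff,
    Sym2.eq, Sym2.rel_iff', Prod.mk.injEq, Prod.swap_prod_mk]
  tauto

lemma isK5_congr {α β : Type} {G : SimpleGraph α} {G' : SimpleGraph β} (e : G ≃g G')
    (h : IsK5 G) : IsK5 G' :=
  h.elim fun i => ⟨e.symm.trans i⟩

lemma isOreComposition_congr {α β V₁ V₂ : Type} {G : SimpleGraph α} {G' : SimpleGraph β}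
    {G₁ : SimpleGraph V₁} {G₂ : SimpleGraph V₂} (e : G ≃g G')
    (h : IsOreComposition G G₁ G₂) : IsOreComposition G' G₁ G₂ := by
  obtain ⟨x, y, z, f₁, f₂, S, hxy, hS, hSne, hSc, hdisj, hcover, hadj⟩ := h
  refine ⟨x, y, z, f₁.trans e.toEquiv.toEmbedding, f₂.trans e.toEquiv.toEmbedding, S,
    hxy, hS, hSne, hSc, ?_, ?_, ?_⟩
  · rw [Set.eq_empty_iff_forall_notMem]
    rintro v ⟨⟨a, ha⟩, ⟨w, hw⟩⟩
    simp only [Function.Embedding.trans_apply, Equiv.coe_toEmbedding] at ha hw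
    have : f₁ a = f₂ w := e.toEquiv.injective (by rw [ha, hw])
    have h2 : f₁ a ∈ Set.range ⇑f₁ ∩ Set.range ⇑f₂ := ⟨⟨a, rfl⟩, ⟨w, this.symm⟩⟩
    rw [hdisj] at h2
    exact h2
  · rw [Set.eq_univ_iff_forall]
    intro v
    have : e.toEquiv.symm v ∈ Set.range ⇑f₁ ∪ Set.range ⇑f₂ := by rw [hcover]; trivial
    rcases this with ⟨a, ha⟩ | ⟨w, hw⟩
    · exact Or.inl ⟨a, by simp [ha]⟩
    · exact Or.inr ⟨w, by simp [hw]⟩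
  · intro a b
    have := hadj (e.toEquiv.symm a) (e.toEquiv.symm b)
    have hGG' : G'.Adj a b ↔ G.Adj (e.toEquiv.symm a) (e.toEquiv.symm b) := by
      conv_lhs => rw [← e.toEquiv.apply_symm_apply a, ← e.toEquiv.apply_symm_apply b]
      rw [RelIso.coe_fn_toEquiv]
      exact e.map_rel_iff
    rw [hGG', this]
    simp only [Function.Embedding.trans_apply, Equiv.coe_toEmbedding, Equiv.eq_symm_apply,
      Equiv.symm_apply_eq]

lemma is5Ore_congr {α β : Type} {G : SimpleGraph α} {G' : SimpleGraph β} (e : G ≃g G')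
    (h : Is5Ore G) : Is5Ore G' := by
  cases h with
  | k5 h => exact .k5 (isK5_congr e h)
  | ore h₁ h₂ h => exact .ore h₁ h₂ (isOreComposition_congr e h)

lemma is5Ore_finite {α : Type} {G : SimpleGraph α} (h : Is5Ore G) : Finite α := by
  induction h with
  | k5 h =>
    obtain ⟨e⟩ := h
    exact Finite.of_equiv _ e.toEquiv.symm
  | ore h₁ h₂ h ih₁ ih₂ =>
    obtain ⟨x, y, z, f₁, f₂, S, -, -, -, -, -, hcover, -⟩ := h
    have hfin : (Set.range ⇑f₁ ∪ Set.range ⇑f₂).Finite :=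
      (Set.finite_range _).union (Set.finite_range _)
    rw [hcover] at hfin
    exact Set.finite_univ_iff.mp hfin

lemma is5Ore_addEdge_transport {α β : Type} {Gα : SimpleGraph α} {Gβ : SimpleGraph β}
    (e : α ≃ β) (h : ∀ a b, Gα.Adj a b ↔ Gβ.Adj (e a) (e b)) (u v : α)
    (h5 : Is5Ore (addEdge Gα u v)) : Is5Ore (addEdge Gβ (e u) (e v)) := by
  refine is5Ore_congr (G := addEdge Gα u v) ⟨e, ?_⟩ h5
  intro a b
  simp only [adj_addEdge, ← h, Equiv.apply_eq_iff_eq, ne_eq, EmbeddingLike.apply_eq_iff_eq]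


lemma induce_adj' {α : Type} (G : SimpleGraph α) (R : Set α) (a b : ↥R) :
    (G.induce R).Adj a b ↔ G.Adj a.1 b.1 := Iff.rfl

lemma oreCollapsible_transport {V' V : Type} {G' : SimpleGraph V'} {H : SimpleGraph V}
    (g : V' → V) {R : Set V'} (hinj : Set.InjOn g R)
    (hadj : ∀ a ∈ R, ∀ b ∈ R, (G'.Adj a b ↔ H.Adj (g a) (g b)))
    (hbd : ∀ r ∈ R, ((∃ s, s ∉ R ∧ G'.Adj r s) ↔ (∃ t, t ∉ g '' R ∧ H.Adj (g r) t)))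
    (hne : g '' R ≠ Set.univ)
    (hOC : OreCollapsible G' R) : OreCollapsible H (g '' R) := by
  classical
  obtain ⟨hRne, u, v, huv, hnadj, hbdry, h5⟩ := hOC
  let e : ↥R ≃ ↥(g '' R) := Equiv.ofBijective
    (fun a => ⟨g a.1, Set.mem_image_of_mem g a.2⟩)
    (by
      constructor
      · intro a b hab
        exact Subtype.ext (hinj a.2 b.2 (congrArg Subtype.val hab))
      · rintro ⟨t, r, hr, rfl⟩
        exact ⟨⟨r, hr⟩, rfl⟩)
  have he : ∀ a : ↥R, (e a).1 = g a.1 := fun a => rfl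
  refine ⟨hne, e u, e v, ?_, ?_, ?_, ?_⟩
  · intro h
    exact huv (hinj u.2 v.2 (by exact h))
  · intro h
    exact hnadj ((hadj u.1 u.2 v.1 v.2).mpr h)
  · ext t
    simp only [boundary, Set.mem_setOf_eq, Set.mem_insert_iff, Set.mem_singleton_iff]
    constructor
    · rintro ⟨⟨r, hr, rfl⟩, w, hw, hadjw⟩
      have hrb : r ∈ boundary G' R := ⟨hr, (hbd r hr).mpr ⟨w, hw, hadjw⟩⟩
      rw [hbdry] at hrb
      rcases hrb with h | h
      · exact Or.inl (by rw [h, he])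
      · exact Or.inr (by rw [Set.mem_singleton_iff.mp h, he])
    · intro ht
      have key : ∀ s : ↥R, s.1 ∈ boundary G' R → t = g s.1 →
          t ∈ g '' R ∧ ∃ w, w ∉ g '' R ∧ H.Adj t w := by
        rintro s hs rfl
        obtain ⟨-, w, hw, hadjw⟩ := hs
        exact ⟨Set.mem_image_of_mem g s.2, (hbd s.1 s.2).mp ⟨w, hw, hadjw⟩⟩
      rcases ht with h | h
      · exact key u (by rw [hbdry]; exact Or.inl rfl) (by rw [h, he])
      · exact key v (by rw [hbdry]; exact Or.inr rfl) (by rw [h, he])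
  · refine is5Ore_addEdge_transport e ?_ u v h5
    intro a b
    rw [induce_adj', induce_adj', he, he]
    exact hadj a.1 a.2 b.1 b.2

lemma emerald_transport {V' V : Type} {G' : SimpleGraph V'} {H : SimpleGraph V}
    (g : V' → V) {E : Set V'} (hinj : Set.InjOn g E)
    (hadj : ∀ a ∈ E, ∀ b ∈ E, a ≠ b → (G'.Adj a b ↔ H.Adj (g a) (g b)))
    (hdeg : ∀ r ∈ E, degS H (g r) = degS G' r)
    (hE : IsEmerald G' E) : IsEmerald H (g '' E) := by
  obtain ⟨h4, hcl, hdg⟩ := hE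
  refine ⟨by rw [Set.ncard_image_of_injOn hinj, h4], ?_, ?_⟩
  · rintro _ ⟨a, ha, rfl⟩ _ ⟨b, hb, rfl⟩ hne
    have hab : a ≠ b := fun h => hne (by rw [h])
    exact (hadj a ha b hb hab).mp (hcl a ha b hb hab)
  · rintro _ ⟨a, ha, rfl⟩
    rw [hdeg a ha]
    exact hdg a ha

lemma IsK5.adj_iff {α : Type} {G : SimpleGraph α} (h : IsK5 G) (a b : α) :
    G.Adj a b ↔ a ≠ b := by
  obtain ⟨e⟩ := h
  rw [← e.map_rel_iff, SimpleGraph.top_adj]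
  constructor
  · intro h1 h2
    exact h1 (by rw [h2])
  · intro h1 h2
    exact h1 (e.injective h2)

lemma IsK5.card {α : Type} {G : SimpleGraph α} (h : IsK5 G) : Nat.card α = 5 := by
  obtain ⟨e⟩ := h
  rw [Nat.card_congr e.toEquiv]
  simp

lemma IsK5.finite {α : Type} {G : SimpleGraph α} (h : IsK5 G) : Finite α := by
  obtain ⟨e⟩ := h
  exact Finite.of_equiv _ e.toEquiv.symm

lemma IsK5.neighborSet_eq {α : Type} {G : SimpleGraph α} (h : IsK5 G) (v : α) :
    G.neighborSet v = {v}ᶜ := by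
  ext w
  rw [SimpleGraph.mem_neighborSet, h.adj_iff, Set.mem_compl_iff, Set.mem_singleton_iff]
  exact ne_comm

lemma IsK5.ncard_compl_singleton {α : Type} {G : SimpleGraph α} (h : IsK5 G) (v : α) :
    ({v}ᶜ : Set α).ncard = 4 := by
  have := h.finite
  rw [Set.compl_eq_univ_diff, Set.ncard_diff (Set.subset_univ _) (Set.toFinite _),
    Set.ncard_univ, h.card, Set.ncard_singleton]

lemma IsK5.degS_eq {α : Type} {G : SimpleGraph α} (h : IsK5 G) (v : α) :
    degS G v = 4 := by
  rw [degS, h.neighborSet_eq, h.ncard_compl_singleton]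

end Aux


section Comp

structure OreData {V V₁ V₂ : Type} (H : SimpleGraph V) (G₁ : SimpleGraph V₁)
    (G₂ : SimpleGraph V₂) where
  x : V₁
  y : V₁
  z : V₂
  f₁ : V₁ ↪ V
  f₂ : {w : V₂ // w ≠ z} ↪ V
  S : Set V₂
  hxy : G₁.Adj x y
  hS : ∀ w ∈ S, G₂.Adj z w
  hSne : S.Nonempty
  hSc : (G₂.neighborSet z \ S).Nonempty
  hdisj : Set.range ⇑f₁ ∩ Set.range ⇑f₂ = ∅
  hcover : Set.range ⇑f₁ ∪ Set.range ⇑f₂ = Set.univ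
  hadj : ∀ a b : V, H.Adj a b ↔
      ((∃ a' b' : V₁, f₁ a' = a ∧ f₁ b' = b ∧ G₁.Adj a' b' ∧
          ¬(a' = x ∧ b' = y) ∧ ¬(a' = y ∧ b' = x)) ∨
       (∃ a' b' : {w : V₂ // w ≠ z}, f₂ a' = a ∧ f₂ b' = b ∧ G₂.Adj a'.1 b'.1) ∨
       (∃ w : {w : V₂ // w ≠ z}, G₂.Adj z w.1 ∧
         ((((a = f₁ x ∧ b = f₂ w) ∨ (b = f₁ x ∧ a = f₂ w)) ∧ w.1 ∈ S) ∨
          (((a = f₁ y ∧ b = f₂ w) ∨ (b = f₁ y ∧ a = f₂ w)) ∧ w.1 ∉ S))))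

variable {V V₁ V₂ : Type} {H : SimpleGraph V} {G₁ : SimpleGraph V₁} {G₂ : SimpleGraph V₂}

lemma oreData_of (h : IsOreComposition H G₁ G₂) : Nonempty (OreData H G₁ G₂) := by
  obtain ⟨x, y, z, f₁, f₂, S, hxy, hS, hSne, hSc, hdisj, hcover, hadj⟩ := h
  exact ⟨⟨x, y, z, f₁, f₂, S, hxy, hS, hSne, hSc, hdisj, hcover, hadj⟩⟩

namespace OreData

variable (D : OreData H G₁ G₂)

lemma ne12 (a : V₁) (w : {w : V₂ // w ≠ D.z}) : D.f₁ a ≠ D.f₂ w := by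
  intro h
  have h2 : D.f₁ a ∈ Set.range ⇑D.f₁ ∩ Set.range ⇑D.f₂ := ⟨⟨a, rfl⟩, ⟨w, h.symm⟩⟩
  rw [D.hdisj] at h2
  exact h2

lemma cover (v : V) : (∃ a, D.f₁ a = v) ∨ (∃ w, D.f₂ w = v) := by
  have h2 : v ∈ Set.range ⇑D.f₁ ∪ Set.range ⇑D.f₂ := by rw [D.hcover]; trivial
  exact h2

lemma xney : D.x ≠ D.y := D.hxy.ne

lemma adj_ff (a b : V₁) : H.Adj (D.f₁ a) (D.f₁ b) ↔
    (G₁.Adj a b ∧ ¬(a = D.x ∧ b = D.y) ∧ ¬(a = D.y ∧ b = D.x)) := by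
  rw [D.hadj]
  constructor
  · rintro (⟨a', b', ha, hb, h1, h2, h3⟩ | ⟨a', b', ha, hb, -⟩ |
      ⟨w, -, (⟨(⟨-, hb⟩ | ⟨-, ha⟩), -⟩ | ⟨(⟨-, hb⟩ | ⟨-, ha⟩), -⟩)⟩)
    · obtain rfl := D.f₁.injective ha
      obtain rfl := D.f₁.injective hb
      exact ⟨h1, h2, h3⟩
    · exact absurd ha (D.ne12 a a').symm
    · exact absurd hb (D.ne12 b w)
    · exact absurd ha (D.ne12 a w)
    · exact absurd hb (D.ne12 b w)
    · exact absurd ha (D.ne12 a w)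
  · rintro ⟨h1, h2, h3⟩
    exact Or.inl ⟨a, b, rfl, rfl, h1, h2, h3⟩

lemma adj_ss (w w' : {w : V₂ // w ≠ D.z}) : H.Adj (D.f₂ w) (D.f₂ w') ↔ G₂.Adj w.1 w'.1 := by
  rw [D.hadj]
  constructor
  · rintro (⟨a', b', ha, -⟩ | ⟨a', b', ha, hb, h1⟩ |
      ⟨w₀, -, (⟨(⟨ha, -⟩ | ⟨hb, -⟩), -⟩ | ⟨(⟨ha, -⟩ | ⟨hb, -⟩), -⟩)⟩)
    · exact absurd ha (D.ne12 a' w)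
    · obtain rfl := D.f₂.injective ha
      obtain rfl := D.f₂.injective hb
      exact h1
    · exact absurd ha.symm (D.ne12 D.x w)
    · exact absurd hb.symm (D.ne12 D.x w')
    · exact absurd ha.symm (D.ne12 D.y w)
    · exact absurd hb.symm (D.ne12 D.y w')
  · intro h1
    exact Or.inr (Or.inl ⟨w, w', rfl, rfl, h1⟩)

lemma adj_fs (a : V₁) (w : {w : V₂ // w ≠ D.z}) : H.Adj (D.f₁ a) (D.f₂ w) ↔
    (G₂.Adj D.z w.1 ∧ ((a = D.x ∧ w.1 ∈ D.S) ∨ (a = D.y ∧ w.1 ∉ D.S))) := by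
  rw [D.hadj]
  constructor
  · rintro (⟨a', b', -, hb, -⟩ | ⟨a', b', ha, -⟩ |
      ⟨w₀, hw₀, (⟨(⟨ha, hb⟩ | ⟨ha, hb⟩), hmem⟩ | ⟨(⟨ha, hb⟩ | ⟨ha, hb⟩), hmem⟩)⟩)
    · exact absurd hb (D.ne12 b' w)
    · exact absurd ha (D.ne12 a a').symm
    · obtain rfl : a = D.x := D.f₁.injective ha
      obtain rfl : w₀ = w := D.f₂.injective hb.symm
      exact ⟨hw₀, Or.inl ⟨rfl, hmem⟩⟩
    · exact absurd ha.symm (D.ne12 D.x w)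
    · obtain rfl : a = D.y := D.f₁.injective ha
      obtain rfl : w₀ = w := D.f₂.injective hb.symm
      exact ⟨hw₀, Or.inr ⟨rfl, hmem⟩⟩
    · exact absurd ha.symm (D.ne12 D.y w)
  · rintro ⟨h1, (⟨rfl, hmem⟩ | ⟨rfl, hmem⟩)⟩
    · exact Or.inr (Or.inr ⟨w, h1, Or.inl ⟨Or.inl ⟨rfl, rfl⟩, hmem⟩⟩)
    · exact Or.inr (Or.inr ⟨w, h1, Or.inr ⟨Or.inl ⟨rfl, rfl⟩, hmem⟩⟩)

lemma not_adj_xy : ¬ H.Adj (D.f₁ D.x) (D.f₁ D.y) := by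
  rw [D.adj_ff]
  rintro ⟨-, h2, -⟩
  exact h2 ⟨rfl, rfl⟩


lemma degS_s (w : {w : V₂ // w ≠ D.z}) : degS H (D.f₂ w) = degS G₂ w.1 := by
  classical
  set φ : V₂ → V := fun v => if h : v = D.z then
      (if w.1 ∈ D.S then D.f₁ D.x else D.f₁ D.y) else D.f₂ ⟨v, h⟩ with hφ
  have himg : φ '' (G₂.neighborSet w.1) = H.neighborSet (D.f₂ w) := by
    ext t
    simp only [Set.mem_image, SimpleGraph.mem_neighborSet]
    constructor
    · rintro ⟨v, hv, rfl⟩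
      by_cases hvz : v = D.z
      · subst hvz
        have hzadj : G₂.Adj D.z w.1 := hv.symm
        by_cases hmem : w.1 ∈ D.S
        · simp only [hφ, dif_pos rfl, if_pos hmem]
          exact ((D.adj_fs D.x w).mpr ⟨hzadj, Or.inl ⟨rfl, hmem⟩⟩).symm
        · simp only [hφ, dif_pos rfl, if_neg hmem]
          exact ((D.adj_fs D.y w).mpr ⟨hzadj, Or.inr ⟨rfl, hmem⟩⟩).symm
      · simp only [hφ, dif_neg hvz]
        exact (D.adj_ss w ⟨v, hvz⟩).mpr hv
    · intro ht
      rcases D.cover t with ⟨a, rfl⟩ | ⟨w', rfl⟩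
      · obtain ⟨hz, hcase⟩ := (D.adj_fs a w).mp ht.symm
        refine ⟨D.z, hz.symm, ?_⟩
        rcases hcase with ⟨rfl, hmem⟩ | ⟨rfl, hmem⟩
        · simp [hφ, hmem]
        · simp [hφ, hmem]
      · exact ⟨w'.1, (D.adj_ss w w').mp ht, by simp only [hφ, dif_neg w'.2]⟩
  have hinj : Set.InjOn φ (G₂.neighborSet w.1) := by
    intro v hv v' hv' heq
    by_cases hvz : v = D.z <;> by_cases hv'z : v' = D.z
    · rw [hvz, hv'z]
    · exfalso
      simp only [hφ, dif_pos hvz, dif_neg hv'z] at heq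
      by_cases hmem : w.1 ∈ D.S
      · rw [if_pos hmem] at heq
        exact D.ne12 D.x ⟨v', hv'z⟩ heq
      · rw [if_neg hmem] at heq
        exact D.ne12 D.y ⟨v', hv'z⟩ heq
    · exfalso
      simp only [hφ, dif_neg hvz, dif_pos hv'z] at heq
      by_cases hmem : w.1 ∈ D.S
      · rw [if_pos hmem] at heq
        exact D.ne12 D.x ⟨v, hvz⟩ heq.symm
      · rw [if_neg hmem] at heq
        exact D.ne12 D.y ⟨v, hvz⟩ heq.symm
    · simp only [hφ, dif_neg hvz, dif_neg hv'z] at heq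
      exact congrArg Subtype.val (D.f₂.injective heq)
  rw [degS, degS, ← himg, Set.ncard_image_of_injOn hinj]

lemma degS_f (a : V₁) (hax : a ≠ D.x) (hay : a ≠ D.y) : degS H (D.f₁ a) = degS G₁ a := by
  have himg : ⇑D.f₁ '' (G₁.neighborSet a) = H.neighborSet (D.f₁ a) := by
    ext t
    simp only [Set.mem_image, SimpleGraph.mem_neighborSet]
    constructor
    · rintro ⟨b, hb, rfl⟩
      exact (D.adj_ff a b).mpr ⟨hb, fun h => hax h.1, fun h => hay h.1⟩
    · intro ht
      rcases D.cover t with ⟨b, rfl⟩ | ⟨w', rfl⟩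
      · exact ⟨b, ((D.adj_ff a b).mp ht).1, rfl⟩
      · rcases ((D.adj_fs a w').mp ht).2 with ⟨h, -⟩ | ⟨h, -⟩
        · exact absurd h hax
        · exact absurd h hay
  rw [degS, degS, ← himg, Set.ncard_image_of_injective _ D.f₁.injective]

lemma nbhd_fy : H.neighborSet (D.f₁ D.y) =
    ⇑D.f₁ '' (G₁.neighborSet D.y \ {D.x}) ∪
      ⇑D.f₂ '' {w : {w : V₂ // w ≠ D.z} | w.1 ∈ G₂.neighborSet D.z \ D.S} := by
  ext t
  simp only [Set.mem_union, Set.mem_image, SimpleGraph.mem_neighborSet, Set.mem_diff,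
    Set.mem_singleton_iff, Set.mem_setOf_eq]
  constructor
  · intro ht
    rcases D.cover t with ⟨b, rfl⟩ | ⟨w', rfl⟩
    · have h1 := (D.adj_ff D.y b).mp ht
      exact Or.inl ⟨b, ⟨h1.1, fun hbx => h1.2.2 ⟨rfl, hbx⟩⟩, rfl⟩
    · have h1 := (D.adj_fs D.y w').mp ht
      rcases h1.2 with ⟨hyx, -⟩ | ⟨-, hmem⟩
      · exact absurd hyx.symm D.xney
      · exact Or.inr ⟨w', ⟨h1.1, hmem⟩, rfl⟩
  · rintro (⟨b, ⟨hb, hbx⟩, rfl⟩ | ⟨w', hw', rfl⟩)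
    · exact (D.adj_ff D.y b).mpr ⟨hb, fun h => D.xney h.1.symm, fun h => hbx h.2⟩
    · exact (D.adj_fs D.y w').mpr ⟨hw'.1, Or.inr ⟨rfl, hw'.2⟩⟩

lemma degS_fy [Finite V] [Finite V₁] :
    degS H (D.f₁ D.y) = degS G₁ D.y - 1 + (G₂.neighborSet D.z \ D.S).ncard := by
  have hval : Subtype.val '' {w : {w : V₂ // w ≠ D.z} | w.1 ∈ G₂.neighborSet D.z \ D.S} =
      G₂.neighborSet D.z \ D.S := by
    ext v
    constructor
    · rintro ⟨w, hw, rfl⟩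
      exact hw
    · intro hv
      have hvz : v ≠ D.z := fun h => G₂.irrefl (h ▸ hv.1)
      exact ⟨⟨v, hvz⟩, hv, rfl⟩
  have hdisj2 : Disjoint (⇑D.f₁ '' (G₁.neighborSet D.y \ {D.x}))
      (⇑D.f₂ '' {w : {w : V₂ // w ≠ D.z} | w.1 ∈ G₂.neighborSet D.z \ D.S}) := by
    rw [Set.disjoint_left]
    rintro t ⟨b, -, rfl⟩ ⟨w, -, heq⟩
    exact D.ne12 b w heq.symm
  rw [degS, D.nbhd_fy, Set.ncard_union_eq hdisj2 (Set.toFinite _) (Set.toFinite _),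
    Set.ncard_image_of_injective _ D.f₁.injective,
    Set.ncard_image_of_injective _ D.f₂.injective]
  congr 1
  · rw [Set.ncard_diff_singleton_of_mem (SimpleGraph.mem_neighborSet _ _ _ |>.mpr D.hxy.symm)]
    rfl
  · conv_rhs => rw [← hval]
    rw [Set.ncard_image_of_injective _ Subtype.val_injective]

def swap : OreData H G₁ G₂ where
  x := D.y
  y := D.x
  z := D.z
  f₁ := D.f₁
  f₂ := D.f₂
  S := G₂.neighborSet D.z \ D.S
  hxy := D.hxy.symm
  hS := fun w hw => hw.1
  hSne := D.hSc
  hSc := by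
    obtain ⟨w₀, hw₀⟩ := D.hSne
    exact ⟨w₀, D.hS w₀ hw₀, fun h => h.2 hw₀⟩
  hdisj := D.hdisj
  hcover := D.hcover
  hadj := by
    intro a b
    rw [D.hadj a b]
    constructor
    · rintro (⟨a', b', h1, h2, h3, h4, h5⟩ | h2 | ⟨w, hw, h3⟩)
      · exact Or.inl ⟨a', b', h1, h2, h3, h5, h4⟩
      · exact Or.inr (Or.inl h2)
      · refine Or.inr (Or.inr ⟨w, hw, ?_⟩)
        rcases h3 with ⟨hor, hmem⟩ | ⟨hor, hmem⟩
        · exact Or.inr ⟨hor, fun hc => hc.2 hmem⟩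
        · exact Or.inl ⟨hor, ⟨hw, hmem⟩⟩
    · rintro (⟨a', b', h1, h2, h3, h4, h5⟩ | h2 | ⟨w, hw, h3⟩)
      · exact Or.inl ⟨a', b', h1, h2, h3, h5, h4⟩
      · exact Or.inr (Or.inl h2)
      · refine Or.inr (Or.inr ⟨w, hw, ?_⟩)
        rcases h3 with ⟨hor, hmem⟩ | ⟨hor, hmem⟩
        · exact Or.inr ⟨hor, hmem.2⟩
        · exact Or.inl ⟨hor, by
            by_contra hc
            exact hmem ⟨hw, hc⟩⟩


lemma oreColl_range_f₁ (h₁ : Is5Ore G₁) : OreCollapsible H (Set.range ⇑D.f₁) := by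
  obtain ⟨w₀, hw₀⟩ := D.hSne
  have hw₀z : w₀ ≠ D.z := fun h => G₂.irrefl (h ▸ D.hS w₀ hw₀)
  obtain ⟨w₁, hw₁⟩ := D.hSc
  have hw₁z : w₁ ≠ D.z := fun h => G₂.irrefl (h ▸ hw₁.1)
  refine ⟨?_, ⟨D.f₁ D.x, ⟨D.x, rfl⟩⟩, ⟨D.f₁ D.y, ⟨D.y, rfl⟩⟩, ?_, ?_, ?_, ?_⟩
  · intro h
    have h2 : D.f₂ ⟨w₀, hw₀z⟩ ∈ Set.range ⇑D.f₁ := h ▸ Set.mem_univ _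
    obtain ⟨a, ha⟩ := h2
    exact D.ne12 a _ ha
  · intro h
    exact D.xney (D.f₁.injective h)
  · exact D.not_adj_xy
  · ext t
    simp only [boundary, Set.mem_setOf_eq, Set.mem_insert_iff, Set.mem_singleton_iff]
    constructor
    · rintro ⟨⟨a, rfl⟩, u, hu, hadju⟩
      rcases D.cover u with ⟨b, rfl⟩ | ⟨w, rfl⟩
      · exact absurd ⟨b, rfl⟩ hu
      · rcases ((D.adj_fs a w).mp hadju).2 with ⟨rfl, -⟩ | ⟨rfl, -⟩
        · exact Or.inl rfl
        · exact Or.inr rfl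
    · rintro (rfl | rfl)
      · refine ⟨⟨D.x, rfl⟩, D.f₂ ⟨w₀, hw₀z⟩, ?_, ?_⟩
        · rintro ⟨a, ha⟩
          exact D.ne12 a _ ha
        · exact (D.adj_fs D.x ⟨w₀, hw₀z⟩).mpr ⟨D.hS w₀ hw₀, Or.inl ⟨rfl, hw₀⟩⟩
      · refine ⟨⟨D.y, rfl⟩, D.f₂ ⟨w₁, hw₁z⟩, ?_, ?_⟩
        · rintro ⟨a, ha⟩
          exact D.ne12 a _ ha
        · exact (D.adj_fs D.y ⟨w₁, hw₁z⟩).mpr ⟨hw₁.1, Or.inr ⟨rfl, hw₁.2⟩⟩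
  · let e : V₁ ≃ ↥(Set.range ⇑D.f₁) := Equiv.ofInjective _ D.f₁.injective
    have hea : ∀ c : V₁, ((e c : ↥(Set.range ⇑D.f₁)) : V) = D.f₁ c := fun _ => rfl
    refine is5Ore_congr (G := G₁) ⟨e, ?_⟩ h₁
    intro a b
    rw [adj_addEdge, induce_adj']
    constructor
    · rintro (h | ⟨-, (⟨ha, hb⟩ | ⟨ha, hb⟩)⟩)
      · rw [hea, hea] at h
        exact ((D.adj_ff a b).mp h).1
      · obtain rfl : a = D.x := D.f₁.injective (by rw [← hea a]; exact congrArg Subtype.val ha)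
        obtain rfl : b = D.y := D.f₁.injective (by rw [← hea b]; exact congrArg Subtype.val hb)
        exact D.hxy
      · obtain rfl : a = D.y := D.f₁.injective (by rw [← hea a]; exact congrArg Subtype.val ha)
        obtain rfl : b = D.x := D.f₁.injective (by rw [← hea b]; exact congrArg Subtype.val hb)
        exact D.hxy.symm
    · intro h
      by_cases hp : (a = D.x ∧ b = D.y) ∨ (a = D.y ∧ b = D.x)
      · refine Or.inr ⟨fun hc => h.ne (e.injective hc), ?_⟩
        rcases hp with ⟨rfl, rfl⟩ | ⟨rfl, rfl⟩
        · exact Or.inl ⟨Subtype.ext (hea _), Subtype.ext (hea _)⟩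
        · exact Or.inr ⟨Subtype.ext (hea _), Subtype.ext (hea _)⟩
      · push_neg at hp
        refine Or.inl ?_
        show H.Adj _ _
        rw [hea, hea]
        refine (D.adj_ff a b).mpr ⟨h, ?_, ?_⟩
        · intro hc
          exact hp.1 hc.1 hc.2
        · intro hc
          exact hp.2 hc.1 hc.2

open Classical in
noncomputable def g₂ : V₂ → V := fun v =>
  if h : v = D.z then D.f₁ D.x else D.f₂ ⟨v, h⟩

lemma g₂_eq {v : V₂} (h : v ≠ D.z) : D.g₂ v = D.f₂ ⟨v, h⟩ := dif_neg h

lemma lift2_oreColl {R : Set V₂} (hz : D.z ∉ R) (h : OreCollapsible G₂ R) :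
    OreCollapsible H (D.g₂ '' R) := by
  have hne : ∀ v ∈ R, v ≠ D.z := fun v hv h' => hz (h' ▸ hv)
  refine oreCollapsible_transport D.g₂ ?_ ?_ ?_ ?_ h
  · intro a ha b hb heq
    rw [D.g₂_eq (hne a ha), D.g₂_eq (hne b hb)] at heq
    exact congrArg Subtype.val (D.f₂.injective heq)
  · intro a ha b hb
    rw [D.g₂_eq (hne a ha), D.g₂_eq (hne b hb), D.adj_ss]
  · intro r hr
    constructor
    · rintro ⟨s, hs, hadjs⟩
      by_cases hsz : s = D.z
      · subst hsz
        have hzr : G₂.Adj D.z r := hadjs.symm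
        by_cases hmem : r ∈ D.S
        · refine ⟨D.f₁ D.x, ?_, ?_⟩
          · rintro ⟨v, hv, heq⟩
            rw [D.g₂_eq (hne v hv)] at heq
            exact D.ne12 D.x _ heq.symm
          · rw [D.g₂_eq (hne r hr)]
            exact ((D.adj_fs D.x ⟨r, hne r hr⟩).mpr ⟨hzr, Or.inl ⟨rfl, hmem⟩⟩).symm
        · refine ⟨D.f₁ D.y, ?_, ?_⟩
          · rintro ⟨v, hv, heq⟩
            rw [D.g₂_eq (hne v hv)] at heq
            exact D.ne12 D.y _ heq.symm
          · rw [D.g₂_eq (hne r hr)]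
            exact ((D.adj_fs D.y ⟨r, hne r hr⟩).mpr ⟨hzr, Or.inr ⟨rfl, hmem⟩⟩).symm
      · refine ⟨D.f₂ ⟨s, hsz⟩, ?_, ?_⟩
        · rintro ⟨v, hv, heq⟩
          rw [D.g₂_eq (hne v hv)] at heq
          have h3 : v = s := congrArg Subtype.val (D.f₂.injective heq)
          exact hs (h3 ▸ hv)
        · rw [D.g₂_eq (hne r hr)]
          exact (D.adj_ss _ _).mpr hadjs
    · rintro ⟨t, ht, hadjt⟩
      rw [D.g₂_eq (hne r hr)] at hadjt
      rcases D.cover t with ⟨a, rfl⟩ | ⟨w, rfl⟩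
      · have h2 := (D.adj_fs a ⟨r, hne r hr⟩).mp hadjt.symm
        exact ⟨D.z, hz, h2.1.symm⟩
      · have h2 := (D.adj_ss _ w).mp hadjt
        refine ⟨w.1, ?_, h2⟩
        intro hwR
        exact ht ⟨w.1, hwR, by rw [D.g₂_eq (hne _ hwR)]⟩
  · intro hU
    have h2 : D.f₁ D.x ∈ D.g₂ '' R := hU ▸ Set.mem_univ _
    obtain ⟨v, hv, heq⟩ := h2
    rw [D.g₂_eq (hne v hv)] at heq
    exact D.ne12 D.x _ heq.symm

lemma lift2_emerald {E : Set V₂} (hz : D.z ∉ E) (h : IsEmerald G₂ E) :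
    IsEmerald H (D.g₂ '' E) := by
  have hne : ∀ v ∈ E, v ≠ D.z := fun v hv h' => hz (h' ▸ hv)
  refine emerald_transport D.g₂ ?_ ?_ ?_ h
  · intro a ha b hb heq
    rw [D.g₂_eq (hne a ha), D.g₂_eq (hne b hb)] at heq
    exact congrArg Subtype.val (D.f₂.injective heq)
  · intro a ha b hb hab
    rw [D.g₂_eq (hne a ha), D.g₂_eq (hne b hb), D.adj_ss]
  · intro r hr
    rw [D.g₂_eq (hne r hr), D.degS_s]

lemma lift1_oreColl {R : Set V₁} (hx : D.x ∉ R) (h : OreCollapsible G₁ R) :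
    OreCollapsible H (⇑D.f₁ '' R) := by
  obtain ⟨w₁, hw₁⟩ := D.hSc
  have hw₁z : w₁ ≠ D.z := fun h' => G₂.irrefl (h' ▸ hw₁.1)
  refine oreCollapsible_transport ⇑D.f₁ D.f₁.injective.injOn ?_ ?_ ?_ h
  · intro a ha b hb
    rw [D.adj_ff]
    constructor
    · intro hab
      exact ⟨hab, fun hc => hx (hc.1 ▸ ha), fun hc => hx (hc.2 ▸ hb)⟩
    · exact fun h' => h'.1
  · intro r hr
    constructor
    · rintro ⟨s, hs, hadjs⟩
      by_cases hry : r = D.y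
      · subst hry
        refine ⟨D.f₂ ⟨w₁, hw₁z⟩, ?_, ?_⟩
        · rintro ⟨v, hv, heq⟩
          exact D.ne12 v _ heq
        · exact (D.adj_fs D.y ⟨w₁, hw₁z⟩).mpr ⟨hw₁.1, Or.inr ⟨rfl, hw₁.2⟩⟩
      · refine ⟨D.f₁ s, ?_, ?_⟩
        · rintro ⟨v, hv, heq⟩
          have h3 : v = s := D.f₁.injective heq
          exact hs (h3 ▸ hv)
        · exact (D.adj_ff r s).mpr ⟨hadjs, fun hc => hx (hc.1 ▸ hr), fun hc => hry hc.1⟩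
    · rintro ⟨t, ht, hadjt⟩
      rcases D.cover t with ⟨b, rfl⟩ | ⟨w, rfl⟩
      · refine ⟨b, ?_, ((D.adj_ff r b).mp hadjt).1⟩
        intro hbR
        exact ht ⟨b, hbR, rfl⟩
      · rcases ((D.adj_fs r w).mp hadjt).2 with ⟨hrx, -⟩ | ⟨hry, -⟩
        · exact absurd (hrx ▸ hr) hx
        · exact ⟨D.x, hx, hry ▸ D.hxy.symm⟩
  · intro hU
    have h2 : D.f₂ ⟨w₁, hw₁z⟩ ∈ ⇑D.f₁ '' R := hU ▸ Set.mem_univ _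
    obtain ⟨v, -, heq⟩ := h2
    exact D.ne12 v _ heq

lemma lift1_emerald [Finite V] [Finite V₁] {E : Set V₁} (hx : D.x ∉ E)
    (hcard : (G₂.neighborSet D.z \ D.S).ncard = 1) (h : IsEmerald G₁ E) :
    IsEmerald H (⇑D.f₁ '' E) := by
  refine emerald_transport ⇑D.f₁ D.f₁.injective.injOn ?_ ?_ h
  · intro a ha b hb hab
    rw [D.adj_ff]
    constructor
    · intro h'
      exact ⟨h', fun hc => hx (hc.1 ▸ ha), fun hc => hx (hc.2 ▸ hb)⟩
    · exact fun h' => h'.1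
  · intro r hr
    by_cases hry : r = D.y
    · subst hry
      rw [D.degS_fy, hcard, h.2.2 _ hr]
    · exact D.degS_f r (fun h' => hx (h' ▸ hr)) hry

lemma emerald_range_f₂ [Finite V₂] (hK : IsK5 G₂) : IsEmerald H (Set.range ⇑D.f₂) := by
  refine ⟨?_, ?_, ?_⟩
  · have e2 : {w : V₂ // w ≠ D.z} ≃ ↥({D.z}ᶜ : Set V₂) :=
      Equiv.subtypeEquivRight (fun w => by simp)
    rw [← Set.image_univ, Set.ncard_image_of_injective _ D.f₂.injective, Set.ncard_univ,
      Nat.card_congr e2, Nat.card_coe_set_eq, hK.ncard_compl_singleton]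
  · rintro _ ⟨w, rfl⟩ _ ⟨w', rfl⟩ hne
    refine (D.adj_ss w w').mpr ((hK.adj_iff _ _).mpr ?_)
    exact fun hc => hne (by rw [Subtype.ext hc])
  · rintro _ ⟨w, rfl⟩
    rw [D.degS_s, hK.degS_eq]

lemma emerald_K5 [Finite V] [Finite V₁] (hK : IsK5 G₁)
    (hcard : (G₂.neighborSet D.z \ D.S).ncard = 1) :
    IsEmerald H (⇑D.f₁ '' ({D.x}ᶜ : Set V₁)) := by
  refine ⟨?_, ?_, ?_⟩
  · rw [Set.ncard_image_of_injective _ D.f₁.injective, hK.ncard_compl_singleton]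
  · rintro _ ⟨a, ha, rfl⟩ _ ⟨b, hb, rfl⟩ hne
    have hab : a ≠ b := fun h => hne (by rw [h])
    exact (D.adj_ff a b).mpr ⟨(hK.adj_iff a b).mpr hab, fun hc => ha hc.1, fun hc => hb hc.2⟩
  · rintro _ ⟨a, ha, rfl⟩
    by_cases hay : a = D.y
    · subst hay
      rw [D.degS_fy, hcard, hK.degS_eq]
    · rw [D.degS_f a (fun h => ha h) hay, hK.degS_eq]

end OreData

end Comp


section Main

/-- The conclusion of the main lemma. -/
def Concl {V : Type} (H : SimpleGraph V) (T : Set V) : Prop :=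
  (∃ R : Set V, OreCollapsible H R ∧ Disjoint R T) ∨
    (∃ E : Set V, IsEmerald H E ∧ Disjoint E T)

/-- The statement of the strengthened main lemma for a graph. -/
def Stmt {V : Type} (H : SimpleGraph V) : Prop :=
  ∀ T : Set V, (∀ a ∈ T, ∀ b ∈ T, a ≠ b → H.Adj a b) →
    (T.Subsingleton ∨ T.ncard = 4) → IsK5 H ∨ Concl H T

lemma case3 {V V₁ V₂ : Type} [Finite V] [Finite V₁] [Finite V₂]
    {H : SimpleGraph V} {G₁ : SimpleGraph V₁} {G₂ : SimpleGraph V₂}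
    (D : OreData H G₁ G₂) (IH₁ : Stmt G₁) (IH₂ : Stmt G₂)
    (T : Set V) (hTcl : ∀ a ∈ T, ∀ b ∈ T, a ≠ b → H.Adj a b) (hT4 : T.ncard = 4)
    (hxT : D.f₁ D.x ∈ T) (hT2 : ∃ w : {w : V₂ // w ≠ D.z}, D.f₂ w ∈ T) :
    Concl H T := by
  classical
  obtain ⟨w₂, hw₂T⟩ := hT2
  have hyT : D.f₁ D.y ∉ T := fun hyT =>
    D.not_adj_xy (hTcl _ hxT _ hyT (fun h => D.xney (D.f₁.injective h)))
  have hTf2 : ∀ t ∈ T, t ≠ D.f₁ D.x → ∃ w : {w : V₂ // w ≠ D.z}, D.f₂ w = t := by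
    intro t ht htx
    rcases D.cover t with ⟨b, rfl⟩ | hw
    · have hbw : H.Adj (D.f₁ b) (D.f₂ w₂) := hTcl _ ht _ hw₂T (D.ne12 b w₂)
      rcases ((D.adj_fs b w₂).mp hbw).2 with ⟨rfl, -⟩ | ⟨rfl, -⟩
      · exact absurd rfl htx
      · exact absurd ht hyT
    · exact hw
  have hWS : ∀ w : {w : V₂ // w ≠ D.z}, D.f₂ w ∈ T → w.1 ∈ D.S ∧ G₂.Adj D.z w.1 := by
    intro w hw
    have hadj := hTcl _ hxT _ hw (D.ne12 D.x w)
    rcases (D.adj_fs D.x w).mp hadj with ⟨hz, ⟨-, hmem⟩ | ⟨hxy', -⟩⟩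
    · exact ⟨hmem, hz⟩
    · exact absurd hxy' D.xney
  set W : Set V₂ := {v | ∃ h : v ≠ D.z, D.f₂ ⟨v, h⟩ ∈ T} with hWdef
  have hzW : D.z ∉ W := fun h => h.1 rfl
  have himgW : D.g₂ '' W = T \ {D.f₁ D.x} := by
    ext t
    constructor
    · rintro ⟨v, ⟨hvz, hvT⟩, rfl⟩
      rw [D.g₂_eq hvz]
      exact ⟨hvT, fun h => D.ne12 D.x ⟨v, hvz⟩ (Set.mem_singleton_iff.mp h).symm⟩
    · rintro ⟨ht, htx⟩
      obtain ⟨w, rfl⟩ := hTf2 t ht htx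
      exact ⟨w.1, ⟨w.2, by simpa using ht⟩, by rw [D.g₂_eq w.2]⟩
  have hinjW : Set.InjOn D.g₂ W := by
    intro a ha b hb heq
    rw [D.g₂_eq ha.1, D.g₂_eq hb.1] at heq
    exact congrArg Subtype.val (D.f₂.injective heq)
  have hWcard : W.ncard = 3 := by
    rw [← Set.ncard_image_of_injOn hinjW, himgW,
      Set.ncard_diff_singleton_of_mem hxT, hT4]
  have hT'cl : ∀ a ∈ insert D.z W, ∀ b ∈ insert D.z W, a ≠ b → G₂.Adj a b := by
    rintro a (rfl | ha) b (rfl | hb) hab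
    · exact absurd rfl hab
    · exact (hWS ⟨b, hb.1⟩ hb.2).2
    · exact (hWS ⟨a, ha.1⟩ ha.2).2.symm
    · have hne : D.f₂ ⟨a, ha.1⟩ ≠ D.f₂ ⟨b, hb.1⟩ := by
        intro h
        exact hab (congrArg Subtype.val (D.f₂.injective h))
      exact (D.adj_ss ⟨a, ha.1⟩ ⟨b, hb.1⟩).mp (hTcl _ ha.2 _ hb.2 hne)
  have hT'4 : (insert D.z W).ncard = 4 := by
    rw [Set.ncard_insert_of_notMem hzW (Set.toFinite _), hWcard]
  by_cases hK2 : IsK5 G₂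
  · -- vertex side is K₅; recurse into G₁ with {x}
    have hsub : D.S ⊆ G₂.neighborSet D.z := fun w hw => D.hS w hw
    have hN4 : (G₂.neighborSet D.z).ncard = 4 := by
      rw [hK2.neighborSet_eq, hK2.ncard_compl_singleton]
    have hWS' : W ⊆ D.S := fun v hv => (hWS ⟨v, hv.1⟩ hv.2).1
    have hS3 : 3 ≤ D.S.ncard := hWcard ▸ Set.ncard_le_ncard hWS' (Set.toFinite _)
    have hSle : D.S.ncard ≤ 4 := hN4 ▸ Set.ncard_le_ncard hsub (Set.toFinite _)
    have hdiff : (G₂.neighborSet D.z \ D.S).ncard =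
        (G₂.neighborSet D.z).ncard - D.S.ncard := Set.ncard_diff hsub (Set.toFinite _)
    have hpos : 0 < (G₂.neighborSet D.z \ D.S).ncard :=
      (Set.ncard_pos (Set.toFinite _)).mpr D.hSc
    have hcard1 : (G₂.neighborSet D.z \ D.S).ncard = 1 := by omega
    have hdisjT : ∀ E : Set V₁, D.x ∉ E → Disjoint (⇑D.f₁ '' E) T := by
      intro E hxE
      rw [Set.disjoint_left]
      rintro t ⟨a, haE, rfl⟩ htT
      by_cases htx : D.f₁ a = D.f₁ D.x
      · exact hxE (D.f₁.injective htx ▸ haE)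
      · obtain ⟨w, hw⟩ := hTf2 _ htT htx
        exact D.ne12 a w hw.symm
    rcases IH₁ {D.x} (by intro a ha b hb hab; rw [ha, hb] at hab; exact absurd rfl hab)
        (Or.inl (Set.subsingleton_singleton)) with hK1 | hR | hE
    · right
      refine ⟨⇑D.f₁ '' ({D.x}ᶜ : Set V₁), D.emerald_K5 hK1 hcard1, hdisjT _ (by simp)⟩
    · obtain ⟨R, hR, hRd⟩ := hR
      have hxR : D.x ∉ R := Set.disjoint_singleton_right.mp hRd
      exact Or.inl ⟨⇑D.f₁ '' R, D.lift1_oreColl hxR hR, hdisjT _ hxR⟩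
    · obtain ⟨E, hE, hEd⟩ := hE
      have hxE : D.x ∉ E := Set.disjoint_singleton_right.mp hEd
      exact Or.inr ⟨⇑D.f₁ '' E, D.lift1_emerald hxE hcard1 hE, hdisjT _ hxE⟩
  · -- recurse into G₂ with the K₄ (insert z W)
    have hdisjT : ∀ E : Set V₂, Disjoint E (insert D.z W) → Disjoint (D.g₂ '' E) T := by
      intro E hdE
      have hzE : D.z ∉ E := fun h =>
        Set.disjoint_left.mp hdE h (Set.mem_insert _ _)
      rw [Set.disjoint_left]
      rintro t ⟨v, hvE, rfl⟩ htT
      have hvz : v ≠ D.z := fun h => hzE (h ▸ hvE)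
      rw [D.g₂_eq hvz] at htT
      have htx : D.f₂ ⟨v, hvz⟩ ≠ D.f₁ D.x := (D.ne12 D.x ⟨v, hvz⟩).symm
      have hvW : v ∈ W := ⟨hvz, htT⟩
      exact Set.disjoint_left.mp hdE hvE (Set.mem_insert_of_mem _ hvW)
    rcases IH₂ (insert D.z W) hT'cl (Or.inr hT'4) with hK | hR | hE
    · exact absurd hK hK2
    · obtain ⟨R, hR, hRd⟩ := hR
      have hzR : D.z ∉ R := fun h =>
        Set.disjoint_left.mp hRd h (Set.mem_insert _ _)
      exact Or.inl ⟨D.g₂ '' R, D.lift2_oreColl hzR hR, hdisjT _ hRd⟩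
    · obtain ⟨E, hE, hEd⟩ := hE
      have hzE : D.z ∉ E := fun h =>
        Set.disjoint_left.mp hEd h (Set.mem_insert _ _)
      exact Or.inr ⟨D.g₂ '' E, D.lift2_emerald hzE hE, hdisjT _ hEd⟩

lemma main_lemma : ∀ {V : Type} {H : SimpleGraph V}, Is5Ore H → Stmt H := by
  intro V H h5
  induction h5 with
  | k5 h => exact fun T _ _ => Or.inl h
  | @ore V V₁ V₂ H G₁ G₂ h₁ h₂ hcomp ih₁ ih₂ =>
    intro T hTcl hTcard
    right
    haveI : Finite V₁ := is5Ore_finite h₁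
    haveI : Finite V₂ := is5Ore_finite h₂
    haveI : Finite V := is5Ore_finite (Is5Ore.ore h₁ h₂ hcomp)
    obtain ⟨D⟩ := oreData_of hcomp
    by_cases hc1 : T ∩ Set.range ⇑D.f₁ = ∅
    · -- T misses the edge side: use range f₁
      left
      refine ⟨Set.range ⇑D.f₁, D.oreColl_range_f₁ h₁, ?_⟩
      rw [Set.disjoint_left]
      intro t ht htT
      exact Set.eq_empty_iff_forall_notMem.mp hc1 t ⟨htT, ht⟩
    by_cases hc2 : T ∩ Set.range ⇑D.f₂ = ∅
    · -- T inside the edge side: recurse into G₂ with {z}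
      have hdisjT : ∀ E : Set V₂, D.z ∉ E → Disjoint (D.g₂ '' E) T := by
        intro E hzE
        rw [Set.disjoint_left]
        rintro t ⟨v, hvE, rfl⟩ htT
        have hvz : v ≠ D.z := fun h => hzE (h ▸ hvE)
        rw [D.g₂_eq hvz] at htT
        exact Set.eq_empty_iff_forall_notMem.mp hc2 _ ⟨htT, ⟨v, hvz⟩, rfl⟩
      rcases ih₂ {D.z} (by intro a ha b hb hab; rw [ha, hb] at hab; exact absurd rfl hab)
          (Or.inl (Set.subsingleton_singleton)) with hK | hR | hE
      · right
        refine ⟨Set.range ⇑D.f₂, D.emerald_range_f₂ hK, ?_⟩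
        rw [Set.disjoint_left]
        intro t ht htT
        exact Set.eq_empty_iff_forall_notMem.mp hc2 t ⟨htT, ht⟩
      · obtain ⟨R, hR, hRd⟩ := hR
        have hzR : D.z ∉ R := Set.disjoint_singleton_right.mp hRd
        exact Or.inl ⟨D.g₂ '' R, D.lift2_oreColl hzR hR, hdisjT _ hzR⟩
      · obtain ⟨E, hE, hEd⟩ := hE
        have hzE : D.z ∉ E := Set.disjoint_singleton_right.mp hEd
        exact Or.inr ⟨D.g₂ '' E, D.lift2_emerald hzE hE, hdisjT _ hzE⟩
    -- T meets both sides
    obtain ⟨t₁, ht₁T, a, rfl⟩ := Set.nonempty_iff_ne_empty.mpr hc1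
    obtain ⟨t₂, ht₂T, w, rfl⟩ := Set.nonempty_iff_ne_empty.mpr hc2
    have hT4 : T.ncard = 4 := by
      rcases hTcard with hss | h4
      · exact absurd (hss ht₁T ht₂T) (D.ne12 a w)
      · exact h4
    have hadj12 := hTcl _ ht₁T _ ht₂T (D.ne12 a w)
    rcases ((D.adj_fs a w).mp hadj12).2 with ⟨rfl, -⟩ | ⟨rfl, -⟩
    · exact case3 D ih₁ ih₂ T hTcl hT4 ht₁T ⟨w, ht₂T⟩
    · exact case3 D.swap ih₁ ih₂ T hTcl hT4 ht₁T ⟨w, ht₂T⟩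

end Main

/-- If `H ≠ K₅` is 5-Ore and `T` is a subgraph of `H` isomorphic to `K₄`, then there exists
either an Ore-collapsible subset of `H` disjoint from `T` or an emerald of `H` disjoint
from `T`. -/
theorem stmt_5 {V : Type} [Fintype V] (H : SimpleGraph V) (h5 : Is5Ore H) (hK : ¬ IsK5 H)
    (T : Set V) (hT4 : T.ncard = 4) (hTcl : ∀ a ∈ T, ∀ b ∈ T, a ≠ b → H.Adj a b) :
    (∃ R : Set V, OreCollapsible H R ∧ Disjoint R T) ∨
    (∃ S : Set V, IsEmerald H S ∧ Disjoint S T) := by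
  rcases main_lemma h5 T hTcl (Or.inr hT4) with h | h | h
  · exact absurd h hK
  · exact Or.inl h
  · exact Or.inr h

end Postle
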